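/- Let ν ≥ 2 be an integer. If λ₁, λ₂ ∈ ℝ with |λ₁| ≤ |λ₂|, then b_ν(λ₂) ≤ b_ν(λ₁). Moreover, for every λ ∈ ℝ, b_ν(λ) ≤ b_ν(0) = Γ(ν−1/2)²/(Γ(ν)Γ(ν−1)) ≤ 1; in particular b_ν is uniformly bounded by 1 in both ν and λ. -/

import Mathlib

open Complex Filter

lemma abs_gammaSeq_eq (x : ℝ) (hx : 0 < x) (y : ℝ) {n : ℕ} (hn : 1 ≤ n) :
    ‖Complex.GammaSeq ((x : ℂ) + y * Complex.I) n‖ =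
      (n : ℝ) ^ x * n.factorial /
        ∏ j ∈ Finset.range (n + 1), ‖(x : ℂ) + y * Complex.I + j‖ := by
  rw [Complex.GammaSeq, norm_div, norm_mul, norm_prod]
  congr 2
  · have hn' : (0 : ℝ) < n := by exact_mod_cast hn
    rw [show ((n : ℕ) : ℂ) = ((n : ℝ) : ℂ) by push_cast; ring,
      Complex.norm_cpow_eq_rpow_re_of_pos hn']
    congr 1
    simp
  · simp

lemma abs_Gamma_anti (x : ℝ) (hx : 0 < x) {y₁ y₂ : ℝ} (h : |y₁| ≤ |y₂|) :
    ‖Complex.Gamma ((x : ℂ) + y₂ * Complex.I)‖ ≤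
      ‖Complex.Gamma ((x : ℂ) + y₁ * Complex.I)‖ := by
  have hy : y₁ ^ 2 ≤ y₂ ^ 2 := by
    rw [← _root_.sq_abs y₁, ← _root_.sq_abs y₂]
    exact pow_le_pow_left₀ (abs_nonneg _) h 2
  have habs : ∀ (y : ℝ) (j : ℕ),
      ‖(x : ℂ) + y * Complex.I + j‖ = Real.sqrt ((x + j) ^ 2 + y ^ 2) := by
    intro y j
    rw [Complex.norm_def, Complex.normSq_apply]
    congr 1
    simp
    ring
  have key : ∀ n, 1 ≤ n →
      ‖Complex.GammaSeq ((x : ℂ) + y₂ * Complex.I) n‖ ≤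
        ‖Complex.GammaSeq ((x : ℂ) + y₁ * Complex.I) n‖ := by
    intro n hn
    rw [abs_gammaSeq_eq x hx y₁ hn, abs_gammaSeq_eq x hx y₂ hn]
    have hP : ∀ j : ℕ, (0 : ℝ) < ‖(x : ℂ) + y₁ * Complex.I + j‖ := by
      intro j
      rw [habs]
      have : (0:ℝ) < x + j := by positivity
      positivity
    have hnum : (0 : ℝ) ≤ (n : ℝ) ^ x * n.factorial := by positivity
    have hd1 : (0:ℝ) < ∏ j ∈ Finset.range (n + 1), ‖(x : ℂ) + y₁ * Complex.I + j‖ :=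
      Finset.prod_pos fun j _ => hP j
    have hle : ∏ j ∈ Finset.range (n + 1), ‖(x : ℂ) + y₁ * Complex.I + j‖ ≤
        ∏ j ∈ Finset.range (n + 1), ‖(x : ℂ) + y₂ * Complex.I + j‖ := by
      refine Finset.prod_le_prod (fun j _ => (hP j).le) fun j _ => ?_
      rw [habs, habs]
      exact Real.sqrt_le_sqrt (by linarith)
    exact div_le_div_of_nonneg_left hnum hd1 hle
  have t1 : Tendsto (fun n => ‖Complex.GammaSeq ((x : ℂ) + y₁ * Complex.I) n‖)
      atTop (nhds (‖Complex.Gamma ((x : ℂ) + y₁ * Complex.I)‖)) :=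
    (continuous_norm.tendsto _).comp (Complex.GammaSeq_tendsto_Gamma _)
  have t2 : Tendsto (fun n => ‖Complex.GammaSeq ((x : ℂ) + y₂ * Complex.I) n‖)
      atTop (nhds (‖Complex.Gamma ((x : ℂ) + y₂ * Complex.I)‖)) :=
    (continuous_norm.tendsto _).comp (Complex.GammaSeq_tendsto_Gamma _)
  exact le_of_tendsto_of_tendsto t2 t1 (eventually_atTop.2 ⟨1, key⟩)

/-- The eigenvalue `b_ν(λ) = |Γ(ν − 1/2 + iλ)|² / (Γ(ν)·Γ(ν−1))` of the normalized
Berezin transform `(ν−1)B_ν` on the spherical function `e_{λ,b}`. -/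
noncomputable def bEig (ν : ℕ) (l : ℝ) : ℝ :=
  ‖Complex.Gamma ((ν : ℂ) - 1/2 + l * Complex.I)‖ ^ 2 /
    (Real.Gamma ν * Real.Gamma ((ν : ℝ) - 1))

/-- For `ν ≥ 2`: `b_ν` is decreasing in `|λ|`, `b_ν(λ) ≤ b_ν(0)`,
`b_ν(0) = Γ(ν−1/2)²/(Γ(ν)Γ(ν−1))`, and `b_ν(0) ≤ 1`; in particular, `b_ν` is
uniformly bounded by `1` in both `ν` and `λ`. -/
theorem bEig_monotone_bounded (ν : ℕ) (hν : 2 ≤ ν) :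
    (∀ l₁ l₂ : ℝ, |l₁| ≤ |l₂| → bEig ν l₂ ≤ bEig ν l₁) ∧
    (∀ l : ℝ, bEig ν l ≤ bEig ν 0) ∧
    bEig ν 0 = Real.Gamma ((ν : ℝ) - 1/2) ^ 2 / (Real.Gamma ν * Real.Gamma ((ν : ℝ) - 1)) ∧
    bEig ν 0 ≤ 1 := by
  have h2 : (2 : ℝ) ≤ (ν : ℝ) := by exact_mod_cast hν
  have hx : (0 : ℝ) < (ν : ℝ) - 1/2 := by linarith
  have hcast : ∀ l : ℝ, (ν : ℂ) - 1/2 + l * Complex.I =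
      (((ν : ℝ) - 1/2 : ℝ) : ℂ) + l * Complex.I := by
    intro l; push_cast; ring
  have hΓν : (0 : ℝ) < Real.Gamma ν := Real.Gamma_pos_of_pos (by linarith)
  have hΓν1 : (0 : ℝ) < Real.Gamma ((ν : ℝ) - 1) := Real.Gamma_pos_of_pos (by linarith)
  have hΓx : (0 : ℝ) < Real.Gamma ((ν : ℝ) - 1/2) := Real.Gamma_pos_of_pos hx
  have hmono : ∀ l₁ l₂ : ℝ, |l₁| ≤ |l₂| → bEig ν l₂ ≤ bEig ν l₁ := by
    intro l₁ l₂ h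
    unfold bEig
    rw [hcast l₁, hcast l₂]
    have := abs_Gamma_anti _ hx h
    gcongr
  have h0 : bEig ν 0 = Real.Gamma ((ν : ℝ) - 1/2) ^ 2 /
      (Real.Gamma ν * Real.Gamma ((ν : ℝ) - 1)) := by
    unfold bEig
    rw [hcast 0]
    simp only [Complex.ofReal_zero, zero_mul, add_zero, Complex.Gamma_ofReal,
      Complex.norm_real, Real.norm_eq_abs, abs_of_pos hΓx]
  have hsq : Real.Gamma ((ν : ℝ) - 1/2) ^ 2 ≤ Real.Gamma ν * Real.Gamma ((ν : ℝ) - 1) := by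
    have hconv := Real.convexOn_log_Gamma.2 (Set.mem_Ioi.2 (show (0:ℝ) < (ν : ℝ) - 1 by linarith))
      (Set.mem_Ioi.2 (show (0:ℝ) < (ν : ℝ) by linarith))
      (by norm_num : (0:ℝ) ≤ (1/2 : ℝ)) (by norm_num : (0:ℝ) ≤ (1/2 : ℝ)) (by norm_num)
    simp only [smul_eq_mul, Function.comp_apply] at hconv
    have heq : (1/2 : ℝ) * ((ν : ℝ) - 1) + (1/2) * (ν : ℝ) = (ν : ℝ) - 1/2 := by ring
    rw [heq] at hconv
    have := Real.exp_le_exp.2 (by linarith [hconv] :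
      2 * Real.log (Real.Gamma ((ν : ℝ) - 1/2)) ≤
        Real.log (Real.Gamma ((ν : ℝ) - 1)) + Real.log (Real.Gamma ν))
    rw [Real.exp_add, Real.exp_log hΓν1, Real.exp_log hΓν,
      show 2 * Real.log (Real.Gamma ((ν : ℝ) - 1/2)) =
        Real.log (Real.Gamma ((ν : ℝ) - 1/2)) + Real.log (Real.Gamma ((ν : ℝ) - 1/2)) by ring,
      Real.exp_add, Real.exp_log hΓx] at this
    nlinarith
  refine ⟨hmono, fun l => by simpa using hmono 0 l (by simp), h0, ?_⟩
  rw [h0, div_le_one (by positivity)]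
  exact hsq
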